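/- arXiv:2503.08380 — 4 statements merged into one kernel-verified Lean document; each statement's English description precedes it below -/
import Mathlib

section
/- For every nonnegative integer n and all indices 𝐤 and 𝐥, one has σ_n(𝐤 * 𝐥) = ∑_{i=0}^{n} σ_i(𝐤) * σ_{n-i}(𝐥) in the vector space 𝓘. -/
/-- Indices: finite sequences of positive integers (modeled as lists of naturals). -/
abbrev Idx := List ℕ

/-- The ℚ-vector space 𝓘 on the set of indices. -/
abbrev Ical := Idx →₀ ℚ

/-- Auxiliary harmonic product on reversed lists (cons = append at the end). -/
noncomputable def harmAux : Idx → Idx → Ical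
  | [], l => Finsupp.single l 1
  | a :: k, [] => Finsupp.single (a :: k) 1
  | a :: k, b :: l =>
      Finsupp.mapDomain (a :: ·) (harmAux k (b :: l)) +
      Finsupp.mapDomain (b :: ·) (harmAux (a :: k) l) +
      Finsupp.mapDomain ((a + b) :: ·) (harmAux k l)
termination_by k l => k.length + l.length

/-- The harmonic (stuffle) product of two indices. -/
noncomputable def harm (k l : Idx) : Ical :=
  Finsupp.mapDomain List.reverse (harmAux k.reverse l.reverse)

/-- Bilinear extension of the harmonic product to 𝓘. -/
noncomputable def harmF (x y : Ical) : Ical :=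
  x.sum fun k c => y.sum fun l d => (c * d) • harm k l

/-- The map σₙ on indices. -/
noncomputable def sigma : ℕ → Idx → Ical
  | n, [] => if n = 0 then Finsupp.single [] 1 else 0
  | n, k :: ks =>
      ∑ a ∈ Finset.range (n + 1),
        ((k + a - 1).choose a : ℚ) •
          Finsupp.mapDomain (fun t => (k + a) :: t) (sigma (n - a) ks)

/-- Linear extension of σₙ to 𝓘. -/
noncomputable def sigmaL (n : ℕ) (x : Ical) : Ical :=
  x.sum fun k c => c • sigma n k

/-- The map ₘIₙ on indices. -/
noncomputable def mI (m n : ℕ) (ks : Idx) : Ical :=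
  ∑ i ∈ Finset.range (ks.length + 1),
    ((-1 : ℚ)) ^ ((ks.drop i).sum) •
      harmF (sigma m (ks.take i)) (sigma n ((ks.drop i).reverse))

/-- The index shuffle product ⧢̃ of two indices. -/
noncomputable def sh : Idx → Idx → Ical
  | [], l => Finsupp.single l 1
  | a :: k, [] => Finsupp.single (a :: k) 1
  | a :: k, b :: l =>
      Finsupp.mapDomain (a :: ·) (sh k (b :: l)) +
      Finsupp.mapDomain (b :: ·) (sh (a :: k) l)
termination_by k l => k.length + l.length

/-- The multiple zeta value of an index. -/
noncomputable def mzv (ks : List ℕ) : ℝ :=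
  ∑' f : {f : Fin ks.length → ℕ // StrictMono f ∧ ∀ i, 0 < f i},
    ∏ i, (1 / (f.1 i : ℝ) ^ ks.get i)

open Finset

lemma hockey (a j : ℕ) : ∑ i ∈ range (j+1), (a + i).choose i = (a + 1 + j).choose j := by
  have h1 : ∀ i ∈ range (j+1), (a + i).choose i = (a + i).choose a := fun i _ =>
    Nat.choose_symm_of_eq_add (Nat.add_comm a i)
  rw [Finset.sum_congr rfl h1]
  have h2 : ∑ m ∈ Icc a (a + j), m.choose a = ∑ i ∈ range (j+1), (a + i).choose a := by
    rw [← Finset.Ico_add_one_right_eq_Icc, Finset.sum_Ico_eq_sum_range,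
      show a + j + 1 - a = j + 1 by omega]
  rw [← h2, Nat.sum_Icc_choose, show a + 1 + j = a + j + 1 by omega]
  exact (Nat.choose_symm_of_eq_add (by omega)).symm

lemma vandAux (a b : ℕ) : ∀ j, ∑ p ∈ range (j+1), (a + p).choose p * (b + (j - p)).choose (j - p)
    = (a + b + 1 + j).choose j := by
  induction b with
  | zero =>
    intro j
    simp only [Nat.zero_add]
    have : ∀ p ∈ range (j+1), (a + p).choose p * (j - p).choose (j - p)
        = (a + p).choose p := by intro p _; rw [Nat.choose_self, mul_one]
    rw [Finset.sum_congr rfl this, hockey, show a + 0 + 1 + j = a + 1 + j by omega]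
  | succ b ihb =>
    intro j
    induction j with
    | zero => simp
    | succ j ihj =>
      rw [Finset.sum_range_succ]
      have split : ∀ p ∈ range (j+1),
          (a + p).choose p * (b + 1 + (j + 1 - p)).choose (j + 1 - p)
          = (a + p).choose p * (b + 1 + (j - p)).choose (j - p)
            + (a + p).choose p * (b + (j + 1 - p)).choose (j + 1 - p) := by
        intro p hp
        have hpj : p ≤ j := by simp at hp; omega
        rw [show b + 1 + (j + 1 - p) = (b + 1 + (j - p)) + 1 by omega,
          show j + 1 - p = (j - p) + 1 by omega, Nat.choose_succ_succ, Nat.mul_add]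
        congr 3
        omega
      rw [Finset.sum_congr rfl split, Finset.sum_add_distrib]
      have last : (a + (j+1)).choose (j+1) * (b + 1 + (j + 1 - (j+1))).choose (j + 1 - (j+1))
          = (a + (j+1)).choose (j+1) * (b + (j + 1 - (j+1))).choose (j + 1 - (j+1)) := by
        simp
      rw [add_assoc, last, ← Finset.sum_range_succ
        (fun p => (a + p).choose p * (b + (j + 1 - p)).choose (j + 1 - p)) (j+1)]
      rw [ihj, ihb (j+1), show a + (b+1) + 1 + (j+1) = (a + b + 1 + (j+1)) + 1 by omega,
        Nat.choose_succ_succ]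
      congr 1
      · congr 1; omega

lemma piece1 {M : Type*} [AddCommMonoid M] (W : ℕ → ℕ → ℕ → ℕ → M) (n : ℕ) :
    ∑ i ∈ range (n+1), ∑ p ∈ range (i+1), ∑ q ∈ range (n-i+1), W p q (i-p) (n-i-q)
      = ∑ j ∈ range (n+1), ∑ m ∈ range (n-j+1), ∑ q ∈ range (n-j-m+1), W j q m (n-j-m-q) := by
  rw [Finset.sum_sigma', Finset.sum_sigma', Finset.sum_sigma', Finset.sum_sigma']
  refine Finset.sum_nbij' (fun x => ⟨⟨x.1.2, x.1.1 - x.1.2⟩, x.2⟩)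
    (fun x => ⟨⟨x.1.1 + x.1.2, x.1.1⟩, x.2⟩) ?_ ?_ ?_ ?_ ?_ <;>
    rintro ⟨⟨i, p⟩, q⟩ hq <;>
    simp only [Finset.mem_sigma, Finset.mem_range] at hq ⊢ <;>
    obtain ⟨⟨h1, h2⟩, h3⟩ := hq
  · omega
  · omega
  · rw [show p + (i - p) = i by omega]
  · rw [show i + p - i = p by omega]
  · rw [show n - p - (i - p) = n - i by omega]

lemma piece2 {M : Type*} [AddCommMonoid M] (W : ℕ → ℕ → ℕ → ℕ → M) (n : ℕ) :
    ∑ i ∈ range (n+1), ∑ p ∈ range (i+1), ∑ q ∈ range (n-i+1), W p q (i-p) (n-i-q)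
      = ∑ q ∈ range (n+1), ∑ m ∈ range (n-q+1), ∑ p ∈ range (m+1), W p q (m-p) (n-q-m) := by
  rw [Finset.sum_sigma', Finset.sum_sigma', Finset.sum_sigma', Finset.sum_sigma']
  refine Finset.sum_nbij' (fun x => ⟨⟨x.2, x.1.1⟩, x.1.2⟩)
    (fun x => ⟨⟨x.1.2, x.2⟩, x.1.1⟩) ?_ ?_ ?_ ?_ ?_ <;>
    rintro ⟨⟨i, p⟩, q⟩ hq <;>
    simp only [Finset.mem_sigma, Finset.mem_range] at hq ⊢ <;>
    obtain ⟨⟨h1, h2⟩, h3⟩ := hq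
  · omega
  · omega
  · rw [show n - q - i = n - i - q by omega]

lemma piece3 {M : Type*} [AddCommMonoid M] (W : ℕ → ℕ → ℕ → ℕ → M) (n : ℕ) :
    ∑ i ∈ range (n+1), ∑ p ∈ range (i+1), ∑ q ∈ range (n-i+1), W p q (i-p) (n-i-q)
      = ∑ j ∈ range (n+1), ∑ p ∈ range (j+1), ∑ m ∈ range (n-j+1), W p (j-p) m (n-j-m) := by
  rw [Finset.sum_sigma', Finset.sum_sigma', Finset.sum_sigma', Finset.sum_sigma']
  refine Finset.sum_nbij' (fun x => ⟨⟨x.1.2 + x.2, x.1.2⟩, x.1.1 - x.1.2⟩)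
    (fun x => ⟨⟨x.1.2 + x.2, x.1.2⟩, x.1.1 - x.1.2⟩) ?_ ?_ ?_ ?_ ?_ <;>
    rintro ⟨⟨i, p⟩, q⟩ hq <;>
    simp only [Finset.mem_sigma, Finset.mem_range] at hq ⊢ <;>
    obtain ⟨⟨h1, h2⟩, h3⟩ := hq
  · omega
  · omega
  · rw [show p + (i - p) = i by omega, show p + q - p = q by omega]
  · rw [show p + (i - p) = i by omega, show p + q - p = q by omega]
  · rw [show p + q - p = q by omega, show n - (p + q) - (i - p) = n - i - q by omega]

lemma vand (a b j : ℕ) (ha : 0 < a) (hb : 0 < b) :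
    ∑ p ∈ range (j+1), (a + p - 1).choose p * (b + (j - p) - 1).choose (j - p)
      = (a + b + j - 1).choose j := by
  obtain ⟨a', rfl⟩ : ∃ a', a = a'+1 := ⟨a-1, by omega⟩
  obtain ⟨b', rfl⟩ : ∃ b', b = b'+1 := ⟨b-1, by omega⟩
  have h := vandAux a' b' j
  simpa [show ∀ x p : ℕ, x + 1 + p - 1 = x + p from fun _ _ => by omega,
    show a'+1+(b'+1)+j-1 = a'+b'+1+j by omega] using h


noncomputable def cm (c : ℕ) : Ical →ₗ[ℚ] Ical := Finsupp.lmapDomain ℚ ℚ (c :: ·)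
noncomputable def rvm : Ical →ₗ[ℚ] Ical := Finsupp.lmapDomain ℚ ℚ List.reverse
noncomputable def T (n : ℕ) : Ical →ₗ[ℚ] Ical :=
  Finsupp.lsum ℚ fun k => LinearMap.toSpanSingleton ℚ Ical (sigma n k)
noncomputable def HA : Ical →ₗ[ℚ] Ical →ₗ[ℚ] Ical :=
  Finsupp.lsum ℚ fun k => LinearMap.toSpanSingleton ℚ (Ical →ₗ[ℚ] Ical)
    (Finsupp.lsum ℚ fun l => LinearMap.toSpanSingleton ℚ Ical (harmAux k l))

@[simp] lemma T_single (n : ℕ) (k : Idx) (c : ℚ) : T n (Finsupp.single k c) = c • sigma n k := by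
  simp [T, Finsupp.lsum_single, LinearMap.toSpanSingleton_apply]

@[simp] lemma cm_single (c : ℕ) (k : Idx) (r : ℚ) :
    cm c (Finsupp.single k r) = Finsupp.single (c :: k) r := by
  simp [cm, Finsupp.mapDomain_single]

@[simp] lemma HA_single_single (k l : Idx) (c d : ℚ) :
    HA (Finsupp.single k c) (Finsupp.single l d) = (c * d) • harmAux k l := by
  simp [HA, Finsupp.lsum_single, LinearMap.toSpanSingleton_apply, mul_smul]

lemma sigma_cons (n c : ℕ) (ks : Idx) :
    sigma n (c :: ks) = ∑ j ∈ range (n+1), ((c + j - 1).choose j : ℚ) • cm (c+j) (sigma (n-j) ks) := by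
  rw [sigma]; rfl

-- (L1)
lemma T_comp_cm (n c : ℕ) :
    (T n).comp (cm c) = ∑ j ∈ range (n+1), ((c + j - 1).choose j : ℚ) • ((cm (c+j)).comp (T (n-j))) := by
  apply Finsupp.lhom_ext
  intro k r
  simp only [LinearMap.comp_apply, cm_single, T_single, LinearMap.sum_apply,
    LinearMap.smul_apply, sigma_cons, Finset.smul_sum]
  apply Finset.sum_congr rfl
  intro j _
  rw [map_smul, smul_comm]

lemma harmAux_nil_right (u : Idx) : harmAux u [] = Finsupp.single u 1 := by
  cases u <;> rw [harmAux]

lemma harmAux_cons (a b : ℕ) (k l : Idx) :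
    harmAux (a :: k) (b :: l)
      = cm a (harmAux k (b :: l)) + cm b (harmAux (a :: k) l) + cm (a+b) (harmAux k l) := by
  rw [harmAux]; rfl

lemma HA_one_left (y : Ical) : HA (Finsupp.single ([] : Idx) 1) y = y := by
  have : HA (Finsupp.single ([] : Idx) 1) = LinearMap.id := by
    apply Finsupp.lhom_ext
    intro l d
    rw [HA_single_single]
    show (1 * d) • harmAux [] l = _
    rw [harmAux, one_mul, Finsupp.smul_single, smul_eq_mul, mul_one]
    rfl
  rw [this]; rfl

lemma HA_one_right (y : Ical) : HA y (Finsupp.single ([] : Idx) 1) = y := by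
  have : HA.flip (Finsupp.single ([] : Idx) 1) = LinearMap.id := by
    apply Finsupp.lhom_ext
    intro l d
    show HA (Finsupp.single l d) (Finsupp.single ([] : Idx) 1) = _
    rw [HA_single_single, harmAux_nil_right, mul_one, Finsupp.smul_single, smul_eq_mul, mul_one]
    rfl
  exact congrArg (fun f => f y) this

lemma HA_cons (a b : ℕ) (x y : Ical) :
    HA (cm a x) (cm b y)
      = cm a (HA x (cm b y)) + cm b (HA (cm a x) y) + cm (a+b) (HA x y) := by
  induction x using Finsupp.induction_linear with
  | zero => simp
  | add f g hf hg =>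
    simp only [map_add, LinearMap.add_apply, hf, hg]
    abel
  | single k c =>
    induction y using Finsupp.induction_linear with
    | zero => simp
    | add f g hf hg =>
      simp only [map_add, LinearMap.add_apply, hf, hg]
      abel
    | single l d =>
      rw [cm_single, cm_single, HA_single_single, harmAux_cons]
      simp only [map_add, map_smul, HA_single_single, cm_single]
      rw [smul_add, smul_add]

lemma sigma_nil (n : ℕ) : sigma n [] = if n = 0 then Finsupp.single [] 1 else 0 := by
  rw [sigma]

lemma T_cm (n c : ℕ) (z : Ical) :
    T n (cm c z) = ∑ j ∈ range (n+1), ((c + j - 1).choose j : ℚ) • cm (c+j) (T (n-j) z) := by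
  have h := congrArg (fun f : Ical →ₗ[ℚ] Ical => f z) (T_comp_cm n c)
  simpa using h

lemma HA_expand_right (x : Ical) (b : ℕ) (l : Idx) (m : ℕ) :
    HA x (sigma m (b::l))
      = ∑ q ∈ range (m+1), ((b + q - 1).choose q : ℚ) • HA x (cm (b+q) (sigma (m-q) l)) := by
  rw [sigma_cons, map_sum]
  simp only [map_smul]

lemma HA_expand_left (y : Ical) (a : ℕ) (k : Idx) (m : ℕ) :
    HA (sigma m (a::k)) y
      = ∑ p ∈ range (m+1), ((a + p - 1).choose p : ℚ) • HA (cm (a+p) (sigma (m-p) k)) y := by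
  rw [sigma_cons, map_sum, LinearMap.sum_apply]
  simp only [map_smul, LinearMap.smul_apply]

lemma mainAux : ∀ (u v : Idx), (∀ x ∈ u, 0 < x) → (∀ x ∈ v, 0 < x) → ∀ n,
    T n (harmAux u v) = ∑ i ∈ range (n+1), HA (sigma i u) (sigma (n-i) v)
  | [], v, _, _, n => by
    rw [harmAux, T_single, one_smul,
      Finset.sum_eq_single_of_mem 0 (by simp : (0:ℕ) ∈ range (n+1))]
    · rw [sigma_nil, if_pos rfl, Nat.sub_zero, HA_one_left]
    · intro i _ hi
      rw [sigma_nil, if_neg hi, map_zero, LinearMap.zero_apply]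
  | a :: k, [], _, _, n => by
    rw [harmAux_nil_right, T_single, one_smul,
      Finset.sum_eq_single_of_mem n (by simp : n ∈ range (n+1))]
    · rw [Nat.sub_self, sigma_nil, if_pos rfl, HA_one_right]
    · intro i hi hin
      rw [sigma_nil, if_neg (by simp at hi; omega), map_zero]
  | a :: k, b :: l, hu, hv, n => by
    have ha : 0 < a := hu a (by simp)
    have hb : 0 < b := hv b (by simp)
    have hk : ∀ x ∈ k, 0 < x := fun x hx => hu x (by simp [hx])
    have hl : ∀ x ∈ l, 0 < x := fun x hx => hv x (by simp [hx])
    have IH1 := mainAux k (b :: l) hk hv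
    have IH2 := mainAux (a :: k) l hu hl
    have IH3 := mainAux k l hk hl
    have RHSeq : ∑ i ∈ range (n+1), HA (sigma i (a::k)) (sigma (n-i) (b::l))
        = (∑ i ∈ range (n+1), ∑ p ∈ range (i+1), ∑ q ∈ range (n-i+1),
            (((a+p-1).choose p : ℚ) * ((b+q-1).choose q : ℚ)) •
              cm (a+p) (HA (sigma (i-p) k) (cm (b+q) (sigma (n-i-q) l))))
          + (∑ i ∈ range (n+1), ∑ p ∈ range (i+1), ∑ q ∈ range (n-i+1),
            (((a+p-1).choose p : ℚ) * ((b+q-1).choose q : ℚ)) •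
              cm (b+q) (HA (cm (a+p) (sigma (i-p) k)) (sigma (n-i-q) l)))
          + (∑ i ∈ range (n+1), ∑ p ∈ range (i+1), ∑ q ∈ range (n-i+1),
            (((a+p-1).choose p : ℚ) * ((b+q-1).choose q : ℚ)) •
              cm ((a+p)+(b+q)) (HA (sigma (i-p) k) (sigma (n-i-q) l))) := by
      simp only [HA_expand_left]
      simp only [HA_expand_right]
      simp only [Finset.smul_sum, smul_smul, HA_cons, smul_add, Finset.sum_add_distrib]
    rw [RHSeq]
    rw [harmAux_cons, map_add, map_add, T_cm, T_cm, T_cm]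
    simp only [IH1, IH2, IH3]
    simp only [HA_expand_right, HA_expand_left]
    simp only [map_sum, map_smul, Finset.smul_sum, smul_smul]
    have key1 : (∑ i ∈ range (n+1), ∑ p ∈ range (i+1), ∑ q ∈ range (n-i+1),
          (((a+p-1).choose p : ℚ) * ((b+q-1).choose q : ℚ)) •
            cm (a+p) (HA (sigma (i-p) k) (cm (b+q) (sigma (n-i-q) l))))
        = ∑ j ∈ range (n+1), ∑ m ∈ range (n-j+1), ∑ q ∈ range (n-j-m+1),
          (((a+j-1).choose j : ℚ) * ((b+q-1).choose q : ℚ)) •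
            cm (a+j) (HA (sigma m k) (cm (b+q) (sigma (n-j-m-q) l))) :=
      piece1 (fun p q m1 m2 => (((a+p-1).choose p : ℚ) * ((b+q-1).choose q : ℚ)) •
        cm (a+p) (HA (sigma m1 k) (cm (b+q) (sigma m2 l)))) n
    have key2 : (∑ i ∈ range (n+1), ∑ p ∈ range (i+1), ∑ q ∈ range (n-i+1),
          (((a+p-1).choose p : ℚ) * ((b+q-1).choose q : ℚ)) •
            cm (b+q) (HA (cm (a+p) (sigma (i-p) k)) (sigma (n-i-q) l)))
        = ∑ q ∈ range (n+1), ∑ m ∈ range (n-q+1), ∑ p ∈ range (m+1),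
          (((b+q-1).choose q : ℚ) * ((a+p-1).choose p : ℚ)) •
            cm (b+q) (HA (cm (a+p) (sigma (m-p) k)) (sigma (n-q-m) l)) := by
      rw [piece2 (fun p q m1 m2 => (((a+p-1).choose p : ℚ) * ((b+q-1).choose q : ℚ)) •
        cm (b+q) (HA (cm (a+p) (sigma m1 k)) (sigma m2 l))) n]
      exact Finset.sum_congr rfl fun q _ => Finset.sum_congr rfl fun m _ =>
        Finset.sum_congr rfl fun p _ => by rw [mul_comm]
    have key3 : (∑ i ∈ range (n+1), ∑ p ∈ range (i+1), ∑ q ∈ range (n-i+1),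
          (((a+p-1).choose p : ℚ) * ((b+q-1).choose q : ℚ)) •
            cm ((a+p)+(b+q)) (HA (sigma (i-p) k) (sigma (n-i-q) l)))
        = ∑ j ∈ range (n+1), ∑ m ∈ range (n-j+1),
          ((a+b+j-1).choose j : ℚ) • cm (a+b+j) (HA (sigma m k) (sigma (n-j-m) l)) := by
      rw [piece3 (fun p q m1 m2 => (((a+p-1).choose p : ℚ) * ((b+q-1).choose q : ℚ)) •
        cm ((a+p)+(b+q)) (HA (sigma m1 k) (sigma m2 l))) n]
      refine Finset.sum_congr rfl fun j hj => ?_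
      rw [Finset.sum_comm]
      refine Finset.sum_congr rfl fun m hm => ?_
      have step1 : ∀ p ∈ range (j+1),
          (((a+p-1).choose p : ℚ) * ((b+(j-p)-1).choose (j-p) : ℚ)) •
            cm ((a+p)+(b+(j-p))) (HA (sigma m k) (sigma (n-j-m) l))
          = (((a+p-1).choose p * (b+(j-p)-1).choose (j-p) : ℕ) : ℚ) •
            cm (a+b+j) (HA (sigma m k) (sigma (n-j-m) l)) := by
        intro p hp
        simp only [Finset.mem_range] at hp
        rw [show a+p+(b+(j-p)) = a+b+j by omega, Nat.cast_mul]
      rw [Finset.sum_congr rfl step1, ← Finset.sum_smul, ← Nat.cast_sum,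
        vand a b j ha hb]
    rw [key1, key2, key3]
termination_by u v => u.length + v.length

lemma sigma_cons_raw (n c : ℕ) (ks : Idx) :
    sigma n (c :: ks) = ∑ j ∈ range (n+1), ((c + j - 1).choose j : ℚ) •
      Finsupp.mapDomain ((c+j) :: ·) (sigma (n-j) ks) := by
  rw [sigma]

lemma sw' (F : ℕ → ℕ → Ical) (n : ℕ) :
    ∑ x ∈ range (n+1), ∑ y ∈ range (n-x+1), F x y
      = ∑ y ∈ range (n+1), ∑ x ∈ range (n-y+1), F x y := by
  rw [Finset.sum_sigma', Finset.sum_sigma']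
  apply Finset.sum_nbij' (fun p => ⟨p.2, p.1⟩) (fun p => ⟨p.2, p.1⟩) <;>
    simp only [Finset.mem_sigma, Finset.mem_range] <;> intros <;>
      first | omega | trivial

lemma sigma_append_single (c : ℕ) : ∀ (ks : Idx) (n : ℕ),
    sigma n (ks ++ [c]) = ∑ j ∈ range (n+1), ((c + j - 1).choose j : ℚ) •
      Finsupp.mapDomain (· ++ [c+j]) (sigma (n-j) ks)
  | [], n => by
    rw [List.nil_append, sigma_cons_raw]
    refine Finset.sum_congr rfl fun j _ => ?_
    congr 1
    rw [sigma_nil]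
    split_ifs <;> simp [Finsupp.mapDomain_single]
  | d :: ks, n => by
    rw [List.cons_append, sigma_cons_raw]
    simp only [sigma_append_single c ks]
    simp only [Finset.smul_sum, Finsupp.mapDomain_finset_sum, Finsupp.mapDomain_smul, smul_smul]
    rw [sw']
    refine Finset.sum_congr rfl fun j hj => ?_
    rw [sigma_cons_raw (n-j) d ks, Finsupp.mapDomain_finset_sum, Finset.smul_sum]
    refine Finset.sum_congr rfl fun p hp => ?_
    rw [Finsupp.mapDomain_smul, smul_smul, mul_comm, ← Finsupp.mapDomain_comp,
      ← Finsupp.mapDomain_comp, show n - p - j = n - j - p by omega]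
    rfl

lemma sigma_reverse : ∀ (ks : Idx) (n : ℕ),
    sigma n ks.reverse = Finsupp.mapDomain List.reverse (sigma n ks)
  | [], n => by
    rw [List.reverse_nil, sigma_nil]
    split_ifs <;> simp [Finsupp.mapDomain_single]
  | c :: ks, n => by
    rw [List.reverse_cons, sigma_append_single, sigma_cons_raw]
    simp only [Finsupp.mapDomain_finset_sum, Finsupp.mapDomain_smul]
    refine Finset.sum_congr rfl fun j _ => ?_
    rw [sigma_reverse ks (n-j), ← Finsupp.mapDomain_comp, ← Finsupp.mapDomain_comp]
    have : ((fun x => x ++ [c + j]) ∘ List.reverse) = (List.reverse ∘ fun x : Idx => (c + j) :: x) := by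
      funext t
      simp
    rw [this]

lemma rvm_apply (z : Ical) : rvm z = Finsupp.mapDomain List.reverse z := rfl

lemma T_rvm (n : ℕ) (z : Ical) : T n (rvm z) = rvm (T n z) := by
  have h : (T n).comp rvm = rvm.comp (T n) := by
    apply Finsupp.lhom_ext
    intro kk c
    simp only [LinearMap.comp_apply, rvm_apply, Finsupp.mapDomain_single, T_single, map_smul]
    rw [sigma_reverse]
  exact congrArg (fun f : Ical →ₗ[ℚ] Ical => f z) h

lemma sigmaL_eq_T (n : ℕ) (x : Ical) : sigmaL n x = T n x := by
  rw [sigmaL, T, Finsupp.lsum_apply]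
  rfl

lemma harmF_single_single (k l : Idx) (c d : ℚ) :
    harmF (Finsupp.single k c) (Finsupp.single l d) = (c * d) • harm k l := by
  rw [harmF, Finsupp.sum_single_index, Finsupp.sum_single_index]
  · simp
  · rw [Finsupp.sum_single_index] <;> simp

lemma harmF_formula (x y : Ical) : harmF x y = rvm (HA (rvm x) (rvm y)) := by
  induction x using Finsupp.induction_linear with
  | zero =>
    simp only [map_zero, LinearMap.zero_apply]
    rw [harmF, Finsupp.sum_zero_index]
  | add f g hf hg =>
    rw [show harmF (f + g) y = harmF f y + harmF g y from
      Finsupp.sum_add_index' (fun _ => by simp [Finsupp.sum]) (fun _ b₁ b₂ => by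
        rw [← Finsupp.sum_add]
        exact Finsupp.sum_congr fun _ _ => by rw [add_mul, add_smul]), hf, hg]
    simp
  | single k c =>
    induction y using Finsupp.induction_linear with
    | zero =>
      simp only [map_zero]
      rw [harmF, Finsupp.sum_single_index] <;> simp [Finsupp.sum_zero_index]
    | add f g hf hg =>
      have expand : ∀ z : Ical, harmF (Finsupp.single k c) z
          = z.sum fun l d => (c * d) • harm k l := fun z => by
        rw [harmF, Finsupp.sum_single_index]
        simp [Finsupp.sum]
      rw [expand, Finsupp.sum_add_index' (fun _ => by simp) (fun _ b₁ b₂ => by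
          rw [mul_add, add_smul]), ← expand, ← expand, hf, hg]
      simp
    | single l d =>
      rw [harmF_single_single]
      simp only [rvm_apply, Finsupp.mapDomain_single]
      rw [HA_single_single, Finsupp.mapDomain_smul, harm]


/-- σₙ(𝐤 * 𝐥) = ∑_{i=0}^{n} σᵢ(𝐤) * σ_{n-i}(𝐥). -/
theorem sigma_harm (n : ℕ) (k l : Idx) (hk : ∀ x ∈ k, 0 < x) (hl : ∀ x ∈ l, 0 < x) :
    sigmaL n (harm k l)
      = ∑ i ∈ Finset.range (n + 1), harmF (sigma i k) (sigma (n - i) l) := by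
  rw [sigmaL_eq_T, harm, ← rvm_apply, T_rvm,
    mainAux k.reverse l.reverse (by simpa using hk) (by simpa using hl) n, map_sum]
  refine Finset.sum_congr rfl fun i _ => ?_
  rw [harmF_formula, rvm_apply, rvm_apply, rvm_apply, rvm_apply, sigma_reverse k i, sigma_reverse l (n-i)]
end

section
/- For every index (k_1,…,k_r) of positive integers, one has {}_2I_0(k_1,…,k_r) = (-1)^{k_1+⋯+k_r} · {}_0I_2(k_r,…,k_1) in 𝓘. In particular, if k_1+⋯+k_r is even, then {}_2I_0(k_1,…,k_r) = I_2(k_r,…,k_1). -/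
theorem harmAux_comm : ∀ k l, harmAux k l = harmAux l k
  | [], [] => rfl
  | [], b :: l => by rw [harmAux, harmAux]
  | a :: k, [] => by rw [harmAux, harmAux]
  | a :: k, b :: l => by
      rw [harmAux, harmAux, harmAux_comm k (b :: l), harmAux_comm (a :: k) l,
        harmAux_comm k l, Nat.add_comm a b]
      abel
termination_by k l => k.length + l.length

theorem harm_comm (k l : Idx) : harm k l = harm l k := by
  unfold harm; rw [harmAux_comm]

theorem harmF_comm (x y : Ical) : harmF x y = harmF y x := by
  unfold harmF
  rw [Finsupp.sum_comm]
  exact Finsupp.sum_congr fun l _ => Finsupp.sum_congr fun k _ => by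
    rw [mul_comm, harm_comm]

theorem sigma_zero (k : Idx) : sigma 0 k = Finsupp.single k 1 := by
  induction k with
  | nil => simp [sigma]
  | cons a t ih => simp [sigma, ih, Finsupp.mapDomain_single]

/-- ₂I₀(k₁,…,k_r) = (-1)^{k₁+⋯+k_r} · ₀I₂(k_r,…,k₁); in particular if the
weight is even then ₂I₀(k₁,…,k_r) = I₂(k_r,…,k₁). -/
theorem mI_two_zero_eq (ks : Idx) (hks : ∀ x ∈ ks, 0 < x) :
    mI 2 0 ks = ((-1 : ℚ)) ^ ks.sum • mI 0 2 ks.reverse ∧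
    (Even ks.sum → mI 2 0 ks = mI 0 2 ks.reverse) := by
  have key : mI 2 0 ks = ((-1 : ℚ)) ^ ks.sum • mI 0 2 ks.reverse := by
    unfold mI
    rw [Finset.smul_sum]
    rw [List.length_reverse]
    conv_rhs => rw [← Finset.sum_range_reflect]
    refine Finset.sum_congr rfl fun i hi => ?_
    have hi' : i ≤ ks.length := Nat.lt_succ_iff.mp (Finset.mem_range.mp hi)
    have h1 : ks.length + 1 - 1 - i = ks.length - i := by omega
    rw [h1]
    have h2 : ks.length - (ks.length - i) = i := by omega
    have htake : ks.reverse.take (ks.length - i) = (ks.drop i).reverse := by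
      rw [List.take_reverse, h2]
    have hdrop : ks.reverse.drop (ks.length - i) = (ks.take i).reverse := by
      rw [List.drop_reverse, h2]
    rw [htake, hdrop, List.reverse_reverse, List.sum_reverse,
      sigma_zero, harmF_comm, smul_smul]
    congr 1
    rw [← List.sum_take_add_sum_drop ks i, pow_add]
    ring_nf
    rw [mul_comm (ks.take i).sum 2, pow_mul]
    norm_num
  refine ⟨key, fun he => ?_⟩
  rw [key, Even.neg_one_pow he, one_smul]
end

section
/- For a nonnegative integer n and positive integers a, b, one has (b) ⧢̃ ({a}^n) = ∑_{i=0}^{n} (-1)^i (ai+b) * ({a}^{n-i}) in 𝓘, where {a}^m denotes the index consisting of m copies of a. -/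
lemma sh_formula (a b n : ℕ) : sh [b] (List.replicate n a)
    = ∑ j ∈ Finset.range (n+1), Finsupp.single (List.replicate j a ++ b :: List.replicate (n-j) a) 1 := by
  induction n with
  | zero => simp [sh]
  | succ n ih =>
    rw [List.replicate_succ]
    conv_lhs => rw [sh]
    rw [sh, Finsupp.mapDomain_single, ih, Finsupp.mapDomain_finset_sum]
    conv_rhs => rw [Finset.sum_range_succ']
    rw [add_comm]
    congr 1
    apply Finset.sum_congr rfl
    intro j hj
    rw [Finsupp.mapDomain_single, List.replicate_succ]
    have h : n + 1 - (j + 1) = n - j := by omega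
    rw [h]
    rfl

lemma harmAux_formula (a c m : ℕ) : harmAux [c] (List.replicate m a)
    = (∑ j ∈ Finset.range (m+1), Finsupp.single (List.replicate j a ++ c :: List.replicate (m-j) a) 1)
    + ∑ j ∈ Finset.range m, Finsupp.single (List.replicate j a ++ (c+a) :: List.replicate (m-1-j) a) 1 := by
  induction m with
  | zero => simp [harmAux]
  | succ m ih =>
    rw [List.replicate_succ]
    conv_lhs => rw [harmAux]
    rw [harmAux, harmAux, Finsupp.mapDomain_single, Finsupp.mapDomain_single, ih,
      Finsupp.mapDomain_add, Finsupp.mapDomain_finset_sum, Finsupp.mapDomain_finset_sum]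
    have r1 : (∑ j ∈ Finset.range (m+1+1), (Finsupp.single (List.replicate j a ++ c :: List.replicate (m+1-j) a) 1 : Ical))
        = Finsupp.single (List.replicate 0 a ++ c :: List.replicate (m+1-0) a) 1
          + ∑ j ∈ Finset.range (m+1), Finsupp.single (List.replicate (j+1) a ++ c :: List.replicate (m+1-(j+1)) a) 1 := by
      rw [Finset.sum_range_succ', add_comm]
    have r2 : (∑ j ∈ Finset.range (m+1), (Finsupp.single (List.replicate j a ++ (c+a) :: List.replicate (m+1-1-j) a) 1 : Ical))
        = Finsupp.single (List.replicate 0 a ++ (c+a) :: List.replicate (m+1-1-0) a) 1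
          + ∑ j ∈ Finset.range m, Finsupp.single (List.replicate (j+1) a ++ (c+a) :: List.replicate (m+1-1-(j+1)) a) 1 := by
      rw [Finset.sum_range_succ', add_comm]
    rw [r1, r2]
    simp only [Finsupp.mapDomain_single]
    have e1 : ∀ j ∈ Finset.range (m+1),
        (Finsupp.single (a :: (List.replicate j a ++ c :: List.replicate (m-j) a)) 1 : Ical)
        = Finsupp.single (List.replicate (j+1) a ++ c :: List.replicate (m+1-(j+1)) a) 1 := by
      intro j hj
      have h : m + 1 - (j + 1) = m - j := by omega
      rw [h, List.replicate_succ]; rfl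
    have e2 : ∀ j ∈ Finset.range m,
        (Finsupp.single (a :: (List.replicate j a ++ (c+a) :: List.replicate (m-1-j) a)) 1 : Ical)
        = Finsupp.single (List.replicate (j+1) a ++ (c+a) :: List.replicate (m+1-1-(j+1)) a) 1 := by
      intro j hj
      have h : m + 1 - 1 - (j + 1) = m - 1 - j := by omega
      rw [h, List.replicate_succ]; rfl
    rw [Finset.sum_congr rfl e1, Finset.sum_congr rfl e2]
    have h0a : (Finsupp.single (c :: a :: List.replicate m a) 1 : Ical)
        = Finsupp.single (List.replicate 0 a ++ c :: List.replicate (m+1-0) a) 1 := by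
      simp [List.replicate_succ]
    have h0b : (Finsupp.single ((c+a) :: List.replicate m a) 1 : Ical)
        = Finsupp.single (List.replicate 0 a ++ (c+a) :: List.replicate (m+1-1-0) a) 1 := by
      simp
    rw [h0a, h0b]
    abel

lemma harm_formula (a c m : ℕ) : harm [c] (List.replicate m a)
    = (∑ j ∈ Finset.range (m+1), Finsupp.single (List.replicate j a ++ c :: List.replicate (m-j) a) 1)
    + ∑ j ∈ Finset.range m, Finsupp.single (List.replicate j a ++ (c+a) :: List.replicate (m-1-j) a) 1 := by
  rw [harm]
  have h1 : ([c] : Idx).reverse = [c] := rfl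
  rw [h1, List.reverse_replicate, harmAux_formula, Finsupp.mapDomain_add,
    Finsupp.mapDomain_finset_sum, Finsupp.mapDomain_finset_sum]
  simp only [Finsupp.mapDomain_single]
  congr 1
  · rw [← Finset.sum_range_reflect]
    apply Finset.sum_congr rfl
    intro j hj
    simp only [Finset.mem_range] at hj
    have h2 : m + 1 - 1 - j = m - j := by omega
    have h3 : m - (m - j) = j := by omega
    rw [h2, List.reverse_append, List.reverse_cons, List.reverse_replicate,
      List.reverse_replicate, h3]
    simp [List.append_assoc]
  · rw [← Finset.sum_range_reflect]
    apply Finset.sum_congr rfl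
    intro j hj
    simp only [Finset.mem_range] at hj
    have h3 : m - 1 - (m - 1 - j) = j := by omega
    rw [List.reverse_append, List.reverse_cons, List.reverse_replicate,
      List.reverse_replicate, h3]
    simp [List.append_assoc]

lemma main_lemma (a : ℕ) : ∀ (n c : ℕ),
    ∑ i ∈ Finset.range (n+1), ((-1:ℚ))^i • harm [a*i+c] (List.replicate (n-i) a)
      = ∑ j ∈ Finset.range (n+1), Finsupp.single (List.replicate j a ++ c :: List.replicate (n-j) a) 1 := by
  intro n
  induction n with
  | zero =>
    intro c
    simp only [Finset.sum_range_one, pow_zero, one_smul, Nat.sub_zero, Nat.mul_zero, Nat.zero_add]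
    simp [harm, harmAux]
  | succ n ih =>
    intro c
    rw [Finset.sum_range_succ']
    have e : ∀ i ∈ Finset.range (n+1),
        ((-1:ℚ))^(i+1) • harm [a*(i+1)+c] (List.replicate (n+1-(i+1)) a)
          = -(((-1:ℚ))^i • harm [a*i+(a+c)] (List.replicate (n-i) a)) := by
      intro i hi
      have h1 : a*(i+1)+c = a*i+(a+c) := by ring
      have h2 : n+1-(i+1) = n-i := by omega
      rw [h1, h2, pow_succ, mul_smul, neg_one_smul, smul_neg]
    rw [Finset.sum_congr rfl e, Finset.sum_neg_distrib, ih (a+c)]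
    simp only [pow_zero, one_smul, Nat.sub_zero, Nat.mul_zero, Nat.zero_add]
    rw [harm_formula]
    have e2 : ∀ j ∈ Finset.range (n+1),
        (Finsupp.single (List.replicate j a ++ (c+a) :: List.replicate (n+1-1-j) a) 1 : Ical)
          = Finsupp.single (List.replicate j a ++ (a+c) :: List.replicate (n-j) a) 1 := by
      intro j hj
      rw [Nat.add_comm c a]
      rfl
    rw [Finset.sum_congr rfl e2]
    abel

/-- (b) ⧢̃ ({a}ⁿ) = ∑_{i=0}^{n} (-1)ⁱ (ai+b) * ({a}^{n-i}). -/
theorem sh_single_replicate (n a b : ℕ) (ha : 0 < a) (hb : 0 < b) :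
    sh [b] (List.replicate n a)
      = ∑ i ∈ Finset.range (n + 1),
          ((-1 : ℚ)) ^ i • harm [a * i + b] (List.replicate (n - i) a) := by
  rw [sh_formula a b n]
  exact (main_lemma a n b).symm
end

section
/- For every nonnegative integer n, the multiple zeta value ζ({4}^n) := ∑_{0<n_1<⋯<n_n} 1/(n_1^4 ⋯ n_n^4) equals 2^{2n+1} π^{4n} / (4n+2)!. -/
open Finset Filter Topology Complex
open scoped Real ENNReal

namespace MzvAux


noncomputable def finsetEquiv (n : ℕ) :
    {f : Fin n → ℕ // StrictMono f ∧ ∀ i, 0 < f i} ≃ {s : Finset ℕ // s.card = n} where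
  toFun f := ⟨Finset.image (fun i => f.1 i - 1) Finset.univ, by
    have hinj : Function.Injective (fun i => f.1 i - 1) := by
      intro i j hij
      have h1 := f.2.2 i
      have h2 := f.2.2 j
      simp only at hij
      exact f.2.1.injective (by omega)
    rw [Finset.card_image_of_injective _ hinj, Finset.card_univ, Fintype.card_fin]⟩
  invFun s := ⟨fun i => s.1.orderEmbOfFin s.2 i + 1, by
    constructor
    · intro i j hij
      have := (s.1.orderEmbOfFin s.2).strictMono hij
      dsimp only
      omega
    · intro i; dsimp only; omega⟩
  left_inv := by
    rintro ⟨f, hf, hpos⟩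
    ext i
    simp only
    have hinj : Function.Injective (fun i => f i - 1) := by
      intro i j hij
      have h1 := hpos i
      have h2 := hpos j
      simp only at hij
      exact hf.injective (by omega)
    have hcard : (Finset.image (fun i => f i - 1) Finset.univ).card = n := by
      rw [Finset.card_image_of_injective _ hinj, Finset.card_univ, Fintype.card_fin]
    have hmono : StrictMono (fun i => f i - 1) := by
      intro i j hij
      have h1 := hpos i
      have := hf hij
      dsimp only
      omega
    have heq := Finset.orderEmbOfFin_unique (f := fun i => f i - 1) hcard
      (fun x => Finset.mem_image_of_mem _ (Finset.mem_univ x)) hmono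
    have hi := congrFun heq i
    have := hpos i
    omega
  right_inv := by
    rintro ⟨s, hs⟩
    ext k
    simp only [Finset.mem_image, Finset.mem_univ, true_and]
    constructor
    · rintro ⟨i, rfl⟩
      simpa using s.orderEmbOfFin_mem hs i
    · intro hk
      have : k ∈ Set.range (s.orderEmbOfFin hs) := by
        rw [Finset.range_orderEmbOfFin]; exact hk
      obtain ⟨i, hi⟩ := this
      exact ⟨i, by omega⟩

noncomputable def w (s : Finset ℕ) : ℝ := ∏ k ∈ s, (1 / ((k : ℝ) + 1) ^ 4)

lemma w_nonneg (s : Finset ℕ) : 0 ≤ w s :=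
  Finset.prod_nonneg fun k _ => by positivity

lemma mzv_eq_tsum_finset (n : ℕ) :
    mzv (List.replicate n 4) = ∑' s : {s : Finset ℕ // s.card = n}, w s.1 := by
  have h : ∀ (ks : List ℕ), ks.length = n → (∀ i, ks.get i = 4) →
      mzv ks = ∑' s : {s : Finset ℕ // s.card = n}, w s.1 := by
    intro ks hlen h4
    subst hlen
    unfold mzv
    rw [← Equiv.tsum_eq (finsetEquiv ks.length).symm]
    apply tsum_congr
    rintro ⟨s, hs⟩
    simp only [finsetEquiv, Equiv.coe_fn_symm_mk]
    have himg : Finset.image (s.orderEmbOfFin hs) Finset.univ = s := by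
      apply Finset.coe_injective
      rw [Finset.coe_image, Finset.coe_univ, Set.image_univ, Finset.range_orderEmbOfFin]
    simp only [h4]
    rw [w]
    conv_rhs => rw [← himg]
    rw [Finset.prod_image (fun i _ j _ hij => (s.orderEmbOfFin hs).injective hij)]
    apply Finset.prod_congr rfl
    intro i _
    push_cast
    ring
  exact h _ List.length_replicate (fun i => by simp)



noncomputable def E (n : ℕ) : ℝ≥0∞ :=
  ∑' s : {s : Finset ℕ // s.card = n}, ENNReal.ofReal (w s.1)

noncomputable def wt (x : ℝ) (s : Finset ℕ) : ℝ := ∏ k ∈ s, (x / ((k : ℝ) + 1) ^ 4)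

lemma ofReal_wt (x : ℝ) (hx : 0 ≤ x) (s : Finset ℕ) :
    ENNReal.ofReal (wt x s) = (ENNReal.ofReal x) ^ s.card * ENNReal.ofReal (w s) := by
  rw [wt, ENNReal.ofReal_prod_of_nonneg (fun k _ => by positivity), w,
    ENNReal.ofReal_prod_of_nonneg (fun k _ => by positivity),
    ← Finset.prod_const, ← Finset.prod_mul_distrib]
  apply Finset.prod_congr rfl
  intro k _
  rw [← ENNReal.ofReal_mul hx]
  congr 1
  ring

lemma tsum_wt_eq_sum_E (x : ℝ) (hx : 0 ≤ x) :
    ∑' s : Finset ℕ, ENNReal.ofReal (wt x s)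
      = ∑' n, (ENNReal.ofReal x) ^ n * E n := by
  rw [← Equiv.tsum_eq (Equiv.sigmaFiberEquiv (Finset.card : Finset ℕ → ℕ))]
  rw [ENNReal.tsum_sigma' (fun p => ENNReal.ofReal (wt x ((Equiv.sigmaFiberEquiv Finset.card) p)))]
  apply tsum_congr
  intro n
  rw [E, ← ENNReal.tsum_mul_left]
  apply tsum_congr
  rintro ⟨s, hs⟩
  simp only [Equiv.sigmaFiberEquiv, Equiv.coe_fn_mk]
  rw [ofReal_wt x hx, hs]

lemma tsum_wt_eq_iSup (x : ℝ) (hx : 0 ≤ x) :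
    ∑' s : Finset ℕ, ENNReal.ofReal (wt x s)
      = ⨆ N, ENNReal.ofReal (∏ k ∈ Finset.range N, (1 + x / ((k : ℝ) + 1) ^ 4)) := by
  rw [ENNReal.tsum_eq_iSup_sum' (fun N => (Finset.range N).powerset) ?_]
  · apply iSup_congr
    intro N
    have hexp : ∏ k ∈ Finset.range N, (1 + x / ((k : ℝ) + 1) ^ 4)
        = ∑ t ∈ (Finset.range N).powerset, wt x t := by
      calc ∏ k ∈ Finset.range N, (1 + x / ((k : ℝ) + 1) ^ 4)
          = ∏ k ∈ Finset.range N, (x / ((k : ℝ) + 1) ^ 4 + 1) := by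
            apply Finset.prod_congr rfl; intro k _; ring
        _ = ∑ t ∈ (Finset.range N).powerset,
              (∏ k ∈ t, x / ((k : ℝ) + 1) ^ 4) * ∏ _k ∈ Finset.range N \ t, (1 : ℝ) :=
            Finset.prod_add _ _ _
        _ = ∑ t ∈ (Finset.range N).powerset, wt x t := by
            apply Finset.sum_congr rfl; intro t _; simp [wt]
    rw [hexp]
    exact (ENNReal.ofReal_sum_of_nonneg
      (fun s _ => Finset.prod_nonneg fun k _ => by positivity)).symm
  · intro t
    refine ⟨(t.sup fun u => u.sup id) + 1, fun u hu => ?_⟩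
    rw [Finset.mem_powerset]
    intro k hk
    rw [Finset.mem_range]
    have h1 : k ≤ u.sup id := Finset.le_sup (f := id) hk
    have h2 : u.sup id ≤ t.sup fun u => u.sup id := Finset.le_sup (f := fun u => u.sup id) hu
    omega



noncomputable def L (t : ℝ) : ℝ :=
  (Real.cosh (Real.sqrt 2 * π * t) - Real.cos (Real.sqrt 2 * π * t)) / (2 * π ^ 2 * t ^ 2)

lemma euler_tendsto (t : ℝ) (ht : t ≠ 0) :
    Tendsto (fun N => ∏ k ∈ Finset.range N, (1 + t ^ 4 / ((k : ℝ) + 1) ^ 4))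
      atTop (𝓝 (L t)) := by
  set s2 : ℝ := Real.sqrt 2 with hs2def
  have hs2 : (s2 : ℂ) ^ 2 = 2 := by
    norm_cast
    exact Real.sq_sqrt (by norm_num)
  have hs2ne : (s2 : ℂ) ≠ 0 := by
    simp only [ne_eq, Complex.ofReal_eq_zero, hs2def]
    positivity
  have h2s : (s2 : ℂ) * s2 = 2 := by rw [← sq, hs2]
  set u : ℂ := t * (1 + I) / s2 with hu
  set v : ℂ := t * (1 - I) / s2 with hv
  have hI : I ^ 2 = -1 := Complex.I_sq
  have hu2 : u ^ 2 = I * (t : ℂ) ^ 2 := by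
    rw [hu, div_pow, mul_pow, hs2]
    linear_combination ((t : ℂ) ^ 2 / 2) * hI
  have hv2 : v ^ 2 = -(I * (t : ℂ) ^ 2) := by
    rw [hv, div_pow, mul_pow, hs2]
    linear_combination ((t : ℂ) ^ 2 / 2) * hI
  have huv : u * v = (t : ℂ) ^ 2 := by
    rw [hu, hv, div_mul_div_comm]
    rw [div_eq_iff (by simpa using hs2ne)]
    linear_combination (-(t : ℂ) ^ 2) * hI + (-(t : ℂ) ^ 2) * h2s
  have husub : u - v = (s2 : ℂ) * t * I := by
    rw [hu, hv, div_sub_div_same, div_eq_iff hs2ne]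
    linear_combination (-(t : ℂ) * I) * h2s
  have huadd : u + v = (s2 : ℂ) * t := by
    rw [hu, hv, ← add_div, div_eq_iff hs2ne]
    linear_combination (-(t : ℂ)) * h2s
  have hfac : ∀ j : ℕ, (1 - u ^ 2 / ((j : ℂ) + 1) ^ 2) * (1 - v ^ 2 / ((j : ℂ) + 1) ^ 2)
      = 1 + (t : ℂ) ^ 4 / ((j : ℂ) + 1) ^ 4 := by
    intro j
    have hc : ((j : ℂ) + 1) ≠ 0 := Nat.cast_add_one_ne_zero j
    rw [hu2, hv2]
    field_simp
    ring_nf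
    rw [Complex.I_sq]
    ring
  have h1 := Complex.tendsto_euler_sin_prod u
  have h2 := Complex.tendsto_euler_sin_prod v
  have hmul := h1.mul h2
  have hre : ∀ N : ℕ,
      (↑π * u * ∏ j ∈ Finset.range N, (1 - u ^ 2 / ((j : ℂ) + 1) ^ 2)) *
        (↑π * v * ∏ j ∈ Finset.range N, (1 - v ^ 2 / ((j : ℂ) + 1) ^ 2))
      = ((π ^ 2 * t ^ 2 * ∏ k ∈ Finset.range N, (1 + t ^ 4 / ((k : ℝ) + 1) ^ 4) : ℝ) : ℂ) := by
    intro N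
    push_cast
    have hpr : (∏ j ∈ Finset.range N, (1 - u ^ 2 / ((j : ℂ) + 1) ^ 2)) *
        (∏ j ∈ Finset.range N, (1 - v ^ 2 / ((j : ℂ) + 1) ^ 2))
        = ∏ j ∈ Finset.range N, ((1 : ℂ) + (t : ℂ) ^ 4 / ((j : ℂ) + 1) ^ 4) := by
      rw [← Finset.prod_mul_distrib]
      exact Finset.prod_congr rfl fun j _ => hfac j
    calc (↑π * u * ∏ j ∈ Finset.range N, (1 - u ^ 2 / ((j : ℂ) + 1) ^ 2)) *
        (↑π * v * ∏ j ∈ Finset.range N, (1 - v ^ 2 / ((j : ℂ) + 1) ^ 2))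
        = (↑π ^ 2 * (u * v)) * ((∏ j ∈ Finset.range N, (1 - u ^ 2 / ((j : ℂ) + 1) ^ 2)) *
            (∏ j ∈ Finset.range N, (1 - v ^ 2 / ((j : ℂ) + 1) ^ 2))) := by ring
      _ = _ := by rw [huv, hpr]
  rw [funext hre] at hmul
  have hval : Complex.sin (↑π * u) * Complex.sin (↑π * v)
      = (((Real.cosh (s2 * π * t) - Real.cos (s2 * π * t)) / 2 : ℝ) : ℂ) := by
    have hcc := Complex.cos_sub_cos (↑π * u - ↑π * v) (↑π * u + ↑π * v)
    have e1 : (↑π * u - ↑π * v + (↑π * u + ↑π * v)) / 2 = ↑π * u := by ring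
    have e2 : (↑π * u - ↑π * v - (↑π * u + ↑π * v)) / 2 = -(↑π * v) := by ring
    rw [e1, e2, Complex.sin_neg] at hcc
    have hcos1 : Complex.cos (↑π * u - ↑π * v) = ((Real.cosh (s2 * π * t) : ℝ) : ℂ) := by
      have harg : ↑π * u - ↑π * v = ((s2 * π * t : ℝ) : ℂ) * I := by
        have : ↑π * u - ↑π * v = ↑π * (u - v) := by ring
        rw [this, husub]
        push_cast
        try ring
      rw [harg, Complex.cos_mul_I, Complex.ofReal_cosh]
    have hcos2 : Complex.cos (↑π * u + ↑π * v) = ((Real.cos (s2 * π * t) : ℝ) : ℂ) := by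
      have harg : ↑π * u + ↑π * v = ((s2 * π * t : ℝ) : ℂ) := by
        have : ↑π * u + ↑π * v = ↑π * (u + v) := by ring
        rw [this, huadd]
        push_cast
        try ring
      rw [harg, Complex.ofReal_cos]
    rw [hcos1, hcos2] at hcc
    have hx : (((Real.cosh (s2 * π * t) - Real.cos (s2 * π * t)) / 2 : ℝ) : ℂ)
        = (((Real.cosh (s2 * π * t) : ℝ) : ℂ) - ((Real.cos (s2 * π * t) : ℝ) : ℂ)) / 2 := by
      rw [Complex.ofReal_div, Complex.ofReal_sub]
      norm_num
    rw [hx]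
    linear_combination (-1/2 : ℂ) * hcc
  rw [hval] at hmul
  have hre2 : Tendsto (fun N => π ^ 2 * t ^ 2 * ∏ k ∈ Finset.range N, (1 + t ^ 4 / ((k : ℝ) + 1) ^ 4))
      atTop (𝓝 ((Real.cosh (s2 * π * t) - Real.cos (s2 * π * t)) / 2)) :=
    Filter.tendsto_ofReal_iff.mp hmul
  have hne : (π ^ 2 * t ^ 2 : ℝ) ≠ 0 := by positivity
  have hdiv := hre2.div_const (π ^ 2 * t ^ 2)
  simp only [mul_div_cancel_left₀ _ hne] at hdiv
  have hLval : (Real.cosh (s2 * π * t) - Real.cos (s2 * π * t)) / 2 / (π ^ 2 * t ^ 2) = L t := by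
    rw [L, div_div, show (2:ℝ) * (π ^ 2 * t ^ 2) = 2 * π ^ 2 * t ^ 2 by ring]
  rw [hLval] at hdiv
  exact hdiv


-- ### Part 4: combining

lemma master (t : ℝ) (ht : t ≠ 0) :
    ∑' n, (ENNReal.ofReal (t ^ 4)) ^ n * E n = ENNReal.ofReal (L t) := by
  have hx : (0:ℝ) ≤ t ^ 4 := by positivity
  rw [← tsum_wt_eq_sum_E _ hx, tsum_wt_eq_iSup _ hx]
  have hmono : Monotone (fun N => ENNReal.ofReal
      (∏ k ∈ Finset.range N, (1 + t ^ 4 / ((k : ℝ) + 1) ^ 4))) := by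
    intro m n hmn
    apply ENNReal.ofReal_le_ofReal
    rw [← Finset.prod_range_mul_prod_Ico _ hmn]
    have h1 : (0:ℝ) ≤ ∏ k ∈ Finset.range m, (1 + t ^ 4 / ((k : ℝ) + 1) ^ 4) :=
      Finset.prod_nonneg fun k _ => by positivity
    have h2 : (1:ℝ) ≤ ∏ k ∈ Finset.Ico m n, (1 + t ^ 4 / ((k : ℝ) + 1) ^ 4) := by
      have := Finset.prod_le_prod (s := Finset.Ico m n) (f := fun _ : ℕ => (1:ℝ))
        (g := fun k : ℕ => 1 + t ^ 4 / ((k : ℝ) + 1) ^ 4)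
        (fun i _ => zero_le_one)
        (fun i _ => by
          have h0 : (0:ℝ) ≤ t ^ 4 / ((i : ℝ) + 1) ^ 4 := by positivity
          linarith)
      rwa [Finset.prod_const_one] at this
    exact le_mul_of_one_le_right h1 h2
  have htend : Tendsto (fun N => ENNReal.ofReal
      (∏ k ∈ Finset.range N, (1 + t ^ 4 / ((k : ℝ) + 1) ^ 4))) atTop
      (𝓝 (ENNReal.ofReal (L t))) :=
    (ENNReal.continuous_ofReal.tendsto _).comp (euler_tendsto t ht)
  exact tendsto_nhds_unique (tendsto_atTop_iSup hmono) htend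

lemma E_ne_top (n : ℕ) : E n ≠ ⊤ := by
  have h := master 1 one_ne_zero
  have hle : (ENNReal.ofReal ((1:ℝ) ^ 4)) ^ n * E n ≤ ENNReal.ofReal (L 1) := by
    rw [← h]
    exact ENNReal.le_tsum n
  simp only [one_pow, ENNReal.ofReal_one, one_mul] at hle
  exact ne_top_of_le_ne_top ENNReal.ofReal_ne_top hle

noncomputable def zeta (n : ℕ) : ℝ := (E n).toReal

lemma zeta_nonneg (n : ℕ) : 0 ≤ zeta n := ENNReal.toReal_nonneg

lemma ofReal_zeta (n : ℕ) : ENNReal.ofReal (zeta n) = E n :=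
  ENNReal.ofReal_toReal (E_ne_top n)

lemma mzv_eq_zeta (n : ℕ) : mzv (List.replicate n 4) = zeta n := by
  rw [mzv_eq_tsum_finset, zeta, E, ENNReal.tsum_toReal_eq (fun _ => ENNReal.ofReal_ne_top)]
  exact tsum_congr fun s => (ENNReal.toReal_ofReal (w_nonneg s.1)).symm

lemma L_nonneg (t : ℝ) : 0 ≤ L t := by
  rw [L]
  apply div_nonneg _ (by positivity)
  have h1 := Real.one_le_cosh (Real.sqrt 2 * π * t)
  have h2 := Real.cos_le_one (Real.sqrt 2 * π * t)
  linarith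

lemma zeta_hasSum (t : ℝ) (ht : t ≠ 0) :
    HasSum (fun n => zeta n * (t ^ 4) ^ n) (L t) := by
  have hx : (0:ℝ) ≤ t ^ 4 := by positivity
  have hmaster := master t ht
  have hterm : ∀ n, (ENNReal.ofReal (t ^ 4)) ^ n * E n
      = ENNReal.ofReal (zeta n * (t ^ 4) ^ n) := by
    intro n
    rw [← ofReal_zeta, ← ENNReal.ofReal_pow hx,
      ← ENNReal.ofReal_mul (by positivity : (0:ℝ) ≤ (t ^ 4) ^ n)]
    congr 1
    ring
  rw [funext hterm] at hmaster
  have hne : ∑' n, ENNReal.ofReal (zeta n * (t ^ 4) ^ n) ≠ ⊤ := by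
    rw [hmaster]; exact ENNReal.ofReal_ne_top
  have hsummable : Summable (fun n => zeta n * (t ^ 4) ^ n) := by
    have := ENNReal.summable_toReal hne
    refine this.congr fun n => ?_
    exact ENNReal.toReal_ofReal (mul_nonneg (zeta_nonneg n) (by positivity))
  have htsum : ∑' n, zeta n * (t ^ 4) ^ n = L t := by
    have h1 : (∑' n, ENNReal.ofReal (zeta n * (t ^ 4) ^ n)).toReal
        = ∑' n, zeta n * (t ^ 4) ^ n := by
      rw [ENNReal.tsum_toReal_eq (fun _ => ENNReal.ofReal_ne_top)]
      exact tsum_congr fun n => ENNReal.toReal_ofReal (mul_nonneg (zeta_nonneg n) (by positivity))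
    rw [← h1, hmaster, ENNReal.toReal_ofReal (L_nonneg t)]
  rw [← htsum]
  exact hsummable.hasSum

-- ### Part 5: the closed-form coefficients

noncomputable def cc (n : ℕ) : ℝ :=
  2 ^ (2 * n + 1) * π ^ (4 * n) / (Nat.factorial (4 * n + 2) : ℝ)

lemma cc_nonneg (n : ℕ) : 0 ≤ cc n := by
  rw [cc]; positivity

lemma cc_hasSum (t : ℝ) (ht : t ≠ 0) :
    HasSum (fun n => cc n * (t ^ 4) ^ n) (L t) := by
  set y : ℝ := Real.sqrt 2 * π * t with hy
  have hF := (Real.hasSum_cosh y).sub (Real.hasSum_cos y)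
  set F : ℕ → ℝ := fun n => y ^ (2 * n) / ((2 * n).factorial : ℝ)
      - (-1) ^ n * y ^ (2 * n) / ((2 * n).factorial : ℝ) with hFdef
  have hi : Function.Injective (fun m : ℕ => 2 * m + 1) := fun a b h => by
    have h' : 2 * a + 1 = 2 * b + 1 := h
    omega
  have hzero : ∀ x ∉ Set.range (fun m : ℕ => 2 * m + 1), F x = 0 := by
    intro x hx
    have hev : x % 2 = 0 := by
      rcases Nat.even_or_odd x with h | h
      · exact Nat.even_iff.mp h
      · obtain ⟨k, hk⟩ := h
        exact absurd ⟨k, show 2 * k + 1 = x by omega⟩ hx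
    have hEv : Even x := Nat.even_iff.mpr hev
    simp only [hFdef, hEv.neg_one_pow]
    ring
  have hodd : HasSum (F ∘ fun m : ℕ => 2 * m + 1) (Real.cosh y - Real.cos y) :=
    (hi.hasSum_iff hzero).mpr hF
  have hfe : (F ∘ fun m : ℕ => 2 * m + 1)
      = fun m => 2 * (y ^ (4 * m + 2) / ((4 * m + 2).factorial : ℝ)) := by
    funext m
    have h1 : 2 * (2 * m + 1) = 4 * m + 2 := by ring
    have h2 : ((-1 : ℝ)) ^ (2 * m + 1) = -1 := Odd.neg_one_pow ⟨m, by ring⟩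
    simp only [Function.comp_apply, hFdef, h1, h2]
    ring
  rw [hfe] at hodd
  have hdiv := hodd.div_const (2 * π ^ 2 * t ^ 2)
  have hfe2 : (fun m => 2 * (y ^ (4 * m + 2) / ((4 * m + 2).factorial : ℝ))
        / (2 * π ^ 2 * t ^ 2))
      = fun m => cc m * (t ^ 4) ^ m := by
    funext m
    have hs4 : (Real.sqrt 2) ^ (4 * m + 2) = 2 ^ (2 * m + 1) := by
      have h3 : 4 * m + 2 = 2 * (2 * m + 1) := by ring
      rw [h3, pow_mul, Real.sq_sqrt (by norm_num : (0:ℝ) ≤ 2)]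
    have hfac : (((4 * m + 2).factorial : ℝ)) ≠ 0 := Nat.cast_ne_zero.mpr (Nat.factorial_ne_zero _)
    have hpi : (π : ℝ) ≠ 0 := Real.pi_ne_zero
    rw [hy, cc, mul_pow, mul_pow, hs4]
    field_simp
    ring
  rw [hfe2] at hdiv
  rw [L]
  exact hdiv

-- ### Part 6: spread coefficients and power-series uniqueness

noncomputable def A : ℕ → ℝ := fun m => if m % 4 = 0 then zeta (m / 4) else 0
noncomputable def B : ℕ → ℝ := fun m => if m % 4 = 0 then cc (m / 4) else 0

lemma A_nonneg (m : ℕ) : 0 ≤ A m := by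
  simp only [A]; split
  · exact zeta_nonneg _
  · exact le_rfl

lemma B_nonneg (m : ℕ) : 0 ≤ B m := by
  simp only [B]; split
  · exact cc_nonneg _
  · exact le_rfl

lemma mul4_inj : Function.Injective (fun m : ℕ => 4 * m) := fun a b h => by
  have h' : 4 * a = 4 * b := h
  omega

lemma spread_hasSum {g : ℕ → ℝ} (hg : ∀ m, m % 4 ≠ 0 → g m = 0) {t S : ℝ}
    (h : HasSum (fun n => g (4 * n) * t ^ (4 * n)) S) :
    HasSum (fun m => g m * t ^ m) S := by
  have hzero : ∀ x ∉ Set.range (fun m : ℕ => 4 * m), g x * t ^ x = 0 := by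
    intro x hx
    have : x % 4 ≠ 0 := by
      intro h0
      exact hx ⟨x / 4, show 4 * (x / 4) = x by omega⟩
    rw [hg x this, zero_mul]
  exact (mul4_inj.hasSum_iff hzero).mp h

lemma A_hasSum (t : ℝ) (ht : t ≠ 0) : HasSum (fun m => A m * t ^ m) (L |t|) := by
  apply spread_hasSum (fun m hm => by rw [A]; simp [hm])
  have habs : t ^ 4 = |t| ^ 4 := by
    rw [pow_abs, _root_.abs_of_nonneg (by positivity : (0:ℝ) ≤ t ^ 4)]
  have h := zeta_hasSum |t| (abs_ne_zero.mpr ht)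
  have hfe : (fun n => A (4 * n) * t ^ (4 * n)) = fun n => zeta n * (|t| ^ 4) ^ n := by
    funext n
    have h1 : (4 * n) % 4 = 0 := by omega
    have h2 : (4 * n) / 4 = n := by omega
    simp only [A]; rw [if_pos h1, h2, pow_mul, habs]
  exact hfe ▸ h

lemma B_hasSum (t : ℝ) (ht : t ≠ 0) : HasSum (fun m => B m * t ^ m) (L |t|) := by
  apply spread_hasSum (fun m hm => by rw [B]; simp [hm])
  have habs : t ^ 4 = |t| ^ 4 := by
    rw [pow_abs, _root_.abs_of_nonneg (by positivity : (0:ℝ) ≤ t ^ 4)]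
  have h := cc_hasSum |t| (abs_ne_zero.mpr ht)
  have hfe : (fun n => B (4 * n) * t ^ (4 * n)) = fun n => cc n * (|t| ^ 4) ^ n := by
    funext n
    have h1 : (4 * n) % 4 = 0 := by omega
    have h2 : (4 * n) / 4 = n := by omega
    simp only [B]; rw [if_pos h1, h2, pow_mul, habs]
  exact hfe ▸ h

lemma zeta_zero : zeta 0 = 1 := by
  have hU : ∀ s : {s : Finset ℕ // s.card = 0}, s = ⟨∅, Finset.card_empty⟩ := by
    rintro ⟨s, hs⟩
    simp only [Subtype.mk.injEq]
    exact Finset.card_eq_zero.mp hs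
  have hE : E 0 = ENNReal.ofReal (w ∅) := by
    rw [E]
    rw [tsum_eq_single (⟨∅, Finset.card_empty⟩ : {s : Finset ℕ // s.card = 0})]
    intro b hb
    exact absurd (hU b) hb
  rw [zeta, hE, w]
  simp

lemma cc_zero : cc 0 = 1 := by
  rw [cc]
  norm_num [Nat.factorial]

lemma radius_top (C : ℕ → ℝ) (hC : ∀ m, 0 ≤ C m)
    (hHS : ∀ t : ℝ, t ≠ 0 → HasSum (fun m => C m * t ^ m) (L |t|)) :
    (FormalMultilinearSeries.ofScalars ℝ C).radius = ⊤ := by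
  apply ENNReal.eq_top_of_forall_nnreal_le
  intro r
  apply FormalMultilinearSeries.le_radius_of_summable
  have hn : (fun n => ‖FormalMultilinearSeries.ofScalars ℝ C n‖ * (r:ℝ)^n)
      = fun n => C n * (r:ℝ)^n := by
    funext n
    rw [FormalMultilinearSeries.ofScalars_norm, Real.norm_eq_abs,
      _root_.abs_of_nonneg (hC n)]
  rw [hn]
  rcases eq_or_ne ((r:ℝ)) 0 with h0 | h0
  · apply summable_of_ne_finset_zero (s := ({0} : Finset ℕ))
    intro b hb
    rw [h0, zero_pow (by simpa using hb), mul_zero]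
  · exact (hHS _ h0).summable

lemma ofScalars_sum_val (C : ℕ → ℝ) (c1 : C 0 = 1)
    (hHS : ∀ t : ℝ, t ≠ 0 → HasSum (fun m => C m * t ^ m) (L |t|)) (t : ℝ) :
    (FormalMultilinearSeries.ofScalars ℝ C).sum t = if t = 0 then 1 else L |t| := by
  have hsum : (FormalMultilinearSeries.ofScalars ℝ C).sum t = ∑' n, C n * t ^ n := by
    have h := FormalMultilinearSeries.ofScalars_sum_eq C t
    simpa [smul_eq_mul, FormalMultilinearSeries.ofScalarsSum] using h
  rw [hsum]
  rcases eq_or_ne t 0 with rfl | ht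
  · rw [if_pos rfl]
    have h : HasSum (fun n : ℕ => C n * (0:ℝ) ^ n) (C 0) := by
      have := hasSum_single (f := fun n : ℕ => C n * (0:ℝ) ^ n) 0 (fun b hb => by
        show C b * (0:ℝ) ^ b = 0
        rw [zero_pow hb, mul_zero])
      simpa using this
    rw [h.tsum_eq, c1]
  · rw [if_neg ht, (hHS t ht).tsum_eq]

lemma A_eq_B : A = B := by
  have hA0 : A 0 = 1 := by simp [A, zeta_zero]
  have hB0 : B 0 = 1 := by simp [B, cc_zero]
  set p := FormalMultilinearSeries.ofScalars ℝ A with hpdef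
  set q := FormalMultilinearSeries.ofScalars ℝ B with hqdef
  have hpr : p.radius = ⊤ := radius_top A A_nonneg A_hasSum
  have hqr : q.radius = ⊤ := radius_top B B_nonneg B_hasSum
  have hsum_eq : p.sum = q.sum := by
    funext t
    rw [ofScalars_sum_val A hA0 A_hasSum t, ofScalars_sum_val B hB0 B_hasSum t]
  have h0p : (0:ℝ≥0∞) < p.radius := by rw [hpr]; exact ENNReal.zero_lt_top
  have h0q : (0:ℝ≥0∞) < q.radius := by rw [hqr]; exact ENNReal.zero_lt_top
  have hP := (p.hasFPowerSeriesOnBall h0p).hasFPowerSeriesAt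
  have hQ := (q.hasFPowerSeriesOnBall h0q).hasFPowerSeriesAt
  rw [← hsum_eq] at hQ
  have hpq : p = q := hP.eq_formalMultilinearSeries hQ
  exact FormalMultilinearSeries.ofScalars_series_injective ℝ ℝ hpq

end MzvAux

/-- ζ({4}ⁿ) = 2^{2n+1} π^{4n} / (4n+2)!. -/
theorem mzv_four_repeated (n : ℕ) :
    mzv (List.replicate n 4)
      = 2 ^ (2 * n + 1) * Real.pi ^ (4 * n) / (Nat.factorial (4 * n + 2) : ℝ) := by
  rw [MzvAux.mzv_eq_zeta]
  have h := congrFun MzvAux.A_eq_B (4 * n)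
  have h1 : (4 * n) % 4 = 0 := by omega
  have h2 : (4 * n) / 4 = n := by omega
  simp only [MzvAux.A, MzvAux.B, if_pos h1, h2] at h
  rw [h, MzvAux.cc]
end
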